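/- Let (N_m)_{m≥1} be independent random variables with N_m ~ Poisson(α_m), where α_m = (1/(π²m²)) log(R/δ) with 0 < δ < R. Suppose, conditional on the N_m, W = ∑_{m=1}^∞ m · S_m where S_m is a sum of N_m i.i.d. symmetric ±1 variables, all independent. Then E[e^{iβW}] = (R/δ)^{-β(2π-β)/(4π²)} for β ∈ [0, 2π). -/

import Mathlib

open Real

lemma winding_inner_sum_eq (a c : ℝ) :
    (∑' k : ℕ, (a ^ k * Real.exp (-a) / (Nat.factorial k)) * c ^ k)
      = Real.exp (a * (c - 1)) := by
  have h1 : ∀ k : ℕ, (a ^ k * Real.exp (-a) / (Nat.factorial k)) * c ^ k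
      = Real.exp (-a) * ((a * c) ^ k / (Nat.factorial k)) := by
    intro k; rw [mul_pow]; ring
  rw [tsum_congr h1, tsum_mul_left]
  rw [show (∑' k : ℕ, (a * c) ^ k / (Nat.factorial k)) = Real.exp (a * c) by
    rw [Real.exp_eq_exp_ℝ, NormedSpace.exp_eq_tsum_div]]
  rw [← Real.exp_add]; ring_nf

lemma winding_cos_sum (β : ℝ) (hβ0 : 0 ≤ β) (hβ2π : β < 2 * π) :
    HasSum (fun n : ℕ => 1 / (n : ℝ) ^ 2 * (Real.cos (n * β) - 1))
      (β ^ 2 / 4 - π * β / 2) := by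
  have hπ : (0:ℝ) < π := Real.pi_pos
  have hπ' : (π:ℝ) ≠ 0 := hπ.ne'
  have hx : β / (2 * π) ∈ Set.Icc (0 : ℝ) 1 := by
    constructor
    · positivity
    · rw [div_le_one (by positivity)]; linarith
  have h1 := hasSum_one_div_nat_pow_mul_cos one_ne_zero hx
  have hb : (Polynomial.map (algebraMap ℚ ℝ) (Polynomial.bernoulli (2 * 1))).eval (β / (2 * π))
      = (β / (2 * π)) ^ 2 - β / (2 * π) + 1 / 6 := by
    have h : (bernoulli 2 : ℚ) = 1 / 6 := by rw [bernoulli, bernoulli'_two]; norm_num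
    norm_num [Polynomial.bernoulli, Finset.sum_range_succ, h]
    ring
  rw [hb] at h1
  have hfun : (fun n : ℕ => 1 / (n:ℝ) ^ (2*1) * Real.cos (2 * π * n * (β / (2 * π))))
      = fun n : ℕ => 1 / (n:ℝ) ^ 2 * Real.cos (n * β) := by
    funext n
    rw [mul_one]
    congr 2
    field_simp
  have hval : (-1:ℝ) ^ (1+1) * (2*π) ^ (2*1) / 2 / ((2*1).factorial : ℝ)
        * ((β / (2*π)) ^ 2 - β / (2*π) + 1/6) = β ^ 2 / 4 - π * β / 2 + π ^ 2 / 6 := by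
    norm_num [Nat.factorial]
    field_simp
    ring
  rw [hfun, hval] at h1
  have h3 := h1.sub hasSum_zeta_two
  have hfun2 : (fun n : ℕ => 1 / (n:ℝ) ^ 2 * Real.cos (n * β) - 1 / (n:ℝ) ^ 2)
      = fun n : ℕ => 1 / (n:ℝ) ^ 2 * (Real.cos (n * β) - 1) := by
    funext n; ring
  rw [hfun2] at h3
  convert h3 using 1
  · rfl
  ring

/-- Let `N_m ~ Poisson(α_m)` independent, with `α_m = (1/(π²m²)) log(R/δ)`, `0 < δ < R`,
and `W = ∑_m m·S_m`, where `S_m` is a sum of `N_m` i.i.d. symmetric `±1` variables, all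
independent. Then `E[e^{iβW}] = (R/δ)^{-β(2π-β)/(4π²)}` for `β ∈ [0, 2π)`.
By independence the expectation factorizes over `m`, and the `m`-th factor is
`∑_k (α_m^k e^{-α_m}/k!)(cos(mβ))^k`. -/
theorem winding_char_fun (δ R β : ℝ) (hδ : 0 < δ) (hδR : δ < R)
    (hβ0 : 0 ≤ β) (hβ2π : β < 2 * π) :
    ∏' m : ℕ+,
      (∑' k : ℕ,
        ((Real.log (R / δ) / (π ^ 2 * (m : ℝ) ^ 2)) ^ k *
          Real.exp (-(Real.log (R / δ) / (π ^ 2 * (m : ℝ) ^ 2))) / (Nat.factorial k)) *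
        (Real.cos (m * β)) ^ k)
    = (R / δ) ^ (-(β * (2 * π - β) / (4 * π ^ 2))) := by
  have hπ : (0:ℝ) < π := Real.pi_pos
  have hπ' : (π:ℝ) ≠ 0 := hπ.ne'
  set L := Real.log (R / δ) with hL
  have hcos := winding_cos_sum β hβ0 hβ2π
  have hN : HasSum (fun n : ℕ => L / π ^ 2 * (1 / (n : ℝ) ^ 2 * (Real.cos (n * β) - 1)))
      (L / π ^ 2 * (β ^ 2 / 4 - π * β / 2)) := hcos.mul_left _
  have hsupp : Function.support
      (fun n : ℕ => L / π ^ 2 * (1 / (n : ℝ) ^ 2 * (Real.cos (n * β) - 1)))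
      ⊆ {n : ℕ | 0 < n} := by
    intro n hn
    rcases Nat.eq_zero_or_pos n with rfl | h
    · simp at hn
    · exact h
  have hP : HasSum
      (fun m : ℕ+ => L / π ^ 2 * (1 / ((m : ℕ) : ℝ) ^ 2 * (Real.cos ((m : ℕ) * β) - 1)))
      (L / π ^ 2 * (β ^ 2 / 4 - π * β / 2)) :=
    (hasSum_subtype_iff_of_support_subset hsupp).mpr hN
  have hP' : HasSum (fun m : ℕ+ => L / (π ^ 2 * (m : ℝ) ^ 2) * (Real.cos (m * β) - 1))
      (L / π ^ 2 * (β ^ 2 / 4 - π * β / 2)) := by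
    convert hP using 2 with m
    ring
  have hprod := hP'.rexp
  calc ∏' m : ℕ+,
      (∑' k : ℕ,
        ((L / (π ^ 2 * (m : ℝ) ^ 2)) ^ k *
          Real.exp (-(L / (π ^ 2 * (m : ℝ) ^ 2))) / (Nat.factorial k)) *
        (Real.cos (m * β)) ^ k)
      = ∏' m : ℕ+, Real.exp (L / (π ^ 2 * (m : ℝ) ^ 2) * (Real.cos (m * β) - 1)) :=
        tprod_congr fun m => winding_inner_sum_eq _ _
    _ = Real.exp (L / π ^ 2 * (β ^ 2 / 4 - π * β / 2)) := hprod.tprod_eq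
    _ = (R / δ) ^ (-(β * (2 * π - β) / (4 * π ^ 2))) := by
        rw [Real.rpow_def_of_pos (div_pos (hδ.trans hδR) hδ), ← hL]
        congr 1
        field_simp
        ring
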